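/- arXiv:2508.02607 — 2 statements merged into one kernel-verified Lean document; each statement's English description precedes it below -/
import Mathlib

section
/- Let α ∈ ℂ with |α| < 1. The product Π_p (1 − α^p p^{-s})^{-1} over all primes p converges absolutely for Re(s) > (3/log 3)·log|α|, and for such s it equals the absolutely convergent Dirichlet series Σ_{n≥1} α^{S(n)} n^{-s}. -/
def S (n : ℕ) : ℕ := n.factorization.sum fun p k => k * p

lemma S_one : S 1 = 0 := by simp [S]

lemma S_prime {p : ℕ} (hp : p.Prime) : S p = p := by
  simp [S, hp.factorization]

lemma S_mul {m n : ℕ} (hm : m ≠ 0) (hn : n ≠ 0) : S (m * n) = S m + S n := by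
  unfold S
  rw [Nat.factorization_mul hm hn]
  exact Finsupp.sum_add_index' (fun p => by simp) (fun p k1 k2 => add_mul k1 k2 p)

open Complex in
noncomputable def F (α : ℂ) (s : ℂ) : ℕ →*₀ ℂ where
  toFun n := if n = 0 then 0 else α ^ S n * (n : ℂ) ^ (-s)
  map_zero' := by simp
  map_one' := by simp [S_one]
  map_mul' m n := by
    rcases eq_or_ne m 0 with rfl | hm
    · simp
    rcases eq_or_ne n 0 with rfl | hn
    · simp
    simp only [mul_eq_zero, hm, hn, or_self, if_neg, if_false]
    rw [S_mul hm hn, pow_add, Nat.cast_mul, ← ofReal_natCast m, ← ofReal_natCast n,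
      mul_cpow_ofReal_nonneg m.cast_nonneg n.cast_nonneg]
    ring

lemma F_apply (α s : ℂ) {n : ℕ} (hn : n ≠ 0) :
    F α s n = α ^ S n * (n : ℂ) ^ (-s) := if_neg hn

lemma norm_F (α s : ℂ) {n : ℕ} (hn : n ≠ 0) :
    ‖F α s n‖ = ‖α‖ ^ S n * (n : ℝ) ^ (-s.re) := by
  rw [F_apply α s hn, norm_mul, norm_pow, ← Complex.ofReal_natCast, Complex.norm_cpow_eq_rpow_re_of_pos
      (by exact_mod_cast Nat.pos_of_ne_zero hn), Complex.neg_re]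

lemma norm_F_prime (α s : ℂ) {p : ℕ} (hp : p.Prime) :
    ‖F α s p‖ = ‖α‖ ^ p * (p : ℝ) ^ (-s.re) := by
  rw [norm_F α s hp.ne_zero, S_prime hp]

lemma cube_le_three_pow {p : ℕ} (hp : 2 ≤ p) : p ^ 3 ≤ 3 ^ p := by
  have aux : ∀ n : ℕ, 3 ≤ n → n ^ 3 ≤ 3 ^ n := by
    intro n hn
    induction n, hn using Nat.le_induction with
    | base => decide
    | succ n hn ih =>
      have h2 : 3 * n ^ 2 ≤ n ^ 3 := by nlinarith
      have h3 : 3 * n ≤ n ^ 2 := by nlinarith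
      have h1 : (n + 1) ^ 3 ≤ 3 * n ^ 3 := by nlinarith
      calc (n + 1) ^ 3 ≤ 3 * n ^ 3 := h1
        _ ≤ 3 * 3 ^ n := by omega
        _ = 3 ^ (n + 1) := by ring
  rcases eq_or_lt_of_le hp with h | h
  · subst h; decide
  · exact aux p h

lemma log_ineq {p : ℕ} (hp : p.Prime) : 3 * Real.log p ≤ p * Real.log 3 := by
  have h1 : ((p : ℝ)) ^ (3 : ℕ) ≤ (3 : ℝ) ^ (p : ℕ) := by
    exact_mod_cast cube_le_three_pow hp.two_le
  have hp0 : (0 : ℝ) < (p : ℝ) := by exact_mod_cast hp.pos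
  have hpos : (0 : ℝ) < (p : ℝ) ^ (3 : ℕ) := by positivity
  have := Real.log_le_log hpos h1
  rwa [Real.log_pow, Real.log_pow] at this

lemma norm_F_prime_lt_one {α : ℂ} (hα : ‖α‖ < 1) {s : ℂ}
    (hs : (3 / Real.log 3) * Real.log ‖α‖ < s.re) {p : ℕ} (hp : p.Prime) :
    ‖F α s p‖ < 1 := by
  rw [norm_F_prime α s hp]
  rcases eq_or_lt_of_le (norm_nonneg α) with h0 | h0
  · rw [← h0, zero_pow hp.pos.ne', zero_mul]; norm_num
  · -- 0 < ‖α‖ < 1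
    have hlogα : Real.log ‖α‖ < 0 := Real.log_neg h0 hα
    have hppos : (0 : ℝ) < (p : ℝ) := by exact_mod_cast hp.pos
    have hlogp : 0 < Real.log p := Real.log_pos (by exact_mod_cast hp.one_lt)
    have hlog3 : 0 < Real.log 3 := Real.log_pos (by norm_num)
    rw [Real.rpow_neg hppos.le, mul_inv_lt_iff₀' (by positivity), mul_one]
    have key : (p : ℝ) * Real.log ‖α‖ < s.re * Real.log p := by
      have h1 : (p : ℝ) * Real.log ‖α‖ * Real.log 3 ≤ 3 * Real.log ‖α‖ * Real.log p := by
        have := log_ineq hp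
        nlinarith [hlogα, this]
      have h2 : 3 * Real.log ‖α‖ * Real.log p < s.re * Real.log 3 * Real.log p := by
        have h3 : 3 / Real.log 3 * Real.log ‖α‖ * Real.log p < s.re * Real.log p :=
          (mul_lt_mul_iff_of_pos_right hlogp).mpr hs
        calc 3 * Real.log ‖α‖ * Real.log p
            = (3 / Real.log 3 * Real.log ‖α‖ * Real.log p) * Real.log 3 := by
              field_simp
          _ < (s.re * Real.log p) * Real.log 3 := by
              exact (mul_lt_mul_iff_of_pos_right hlog3).mpr h3
          _ = s.re * Real.log 3 * Real.log p := by ring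
      nlinarith [h1, h2, hlog3]
    have e1 : ‖α‖ ^ p = Real.exp ((p : ℝ) * Real.log ‖α‖) := by
      rw [← Real.log_pow, Real.exp_log (pow_pos h0 p)]
    have e2 : (p : ℝ) ^ s.re = Real.exp (s.re * Real.log p) := by
      rw [Real.rpow_def_of_pos hppos, mul_comm]
    rw [e1, e2]
    exact Real.exp_lt_exp.mpr key

lemma summable_primes_norm_F {α : ℂ} (hα : ‖α‖ < 1) (s : ℂ) :
    Summable (fun p : Nat.Primes => ‖F α s (p : ℕ)‖) := by
  rcases eq_or_lt_of_le (norm_nonneg α) with h0 | h0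
  · have : (fun p : Nat.Primes => ‖F α s (p : ℕ)‖) = fun _ => 0 := by
      funext p
      rw [norm_F_prime α s p.prop, ← h0, zero_pow p.prop.pos.ne', zero_mul]
    rw [this]; exact summable_zero
  · set r := ‖α‖
    set k : ℕ := ⌈-s.re⌉₊
    have hmaj : Summable (fun n : ℕ => (n : ℝ) ^ k * r ^ n) :=
      summable_pow_mul_geometric_of_norm_lt_one k (by rwa [Real.norm_eq_abs, abs_of_pos h0])
    have hmaj' : Summable (fun p : Nat.Primes => ((p : ℕ) : ℝ) ^ k * r ^ (p : ℕ)) :=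
      hmaj.comp_injective Nat.Primes.coe_nat_injective
    refine Summable.of_nonneg_of_le (fun p => norm_nonneg _) (fun p => ?_) hmaj'
    rw [norm_F_prime α s p.prop]
    have hp1 : (1 : ℝ) ≤ ((p : ℕ) : ℝ) := by exact_mod_cast p.prop.one_lt.le
    have h1 : ((p : ℕ) : ℝ) ^ (-s.re) ≤ ((p : ℕ) : ℝ) ^ (k : ℝ) :=
      Real.rpow_le_rpow_of_exponent_le hp1 (Nat.le_ceil _)
    have h2 : ((p : ℕ) : ℝ) ^ ((k : ℕ) : ℝ) = ((p : ℕ) : ℝ) ^ (k : ℕ) :=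
      Real.rpow_natCast _ _
    calc r ^ (p : ℕ) * ((p : ℕ) : ℝ) ^ (-s.re)
        ≤ r ^ (p : ℕ) * ((p : ℕ) : ℝ) ^ (k : ℕ) := by
          refine mul_le_mul_of_nonneg_left ?_ (by positivity)
          rw [← h2]; exact h1
      _ = ((p : ℕ) : ℝ) ^ k * r ^ (p : ℕ) := by ring

lemma summable_norm_F {α : ℂ} (hα : ‖α‖ < 1) {s : ℂ}
    (hs : (3 / Real.log 3) * Real.log ‖α‖ < s.re) :
    Summable (fun n : ℕ => ‖F α s n‖) := by
  classical
  -- the real-valued multiplicative function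
  set G : ℕ →* ℝ :=
    { toFun := fun n => ‖F α s n‖
      map_one' := by show ‖F α s 1‖ = 1; rw [map_one, norm_one]
      map_mul' := fun m n => by
        show ‖F α s (m * n)‖ = ‖F α s m‖ * ‖F α s n‖
        rw [map_mul, norm_mul] } with hG
  have hGval : ∀ n, G n = ‖F α s n‖ := fun n => rfl
  have hlt : ∀ {p : ℕ}, p.Prime → ‖G p‖ < 1 := by
    intro p hp
    rw [hGval, norm_norm]
    exact norm_F_prime_lt_one hα hs hp
  have hlt' : ∀ {p : ℕ}, p.Prime → G p < 1 := fun hp =>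
    (le_abs_self _).trans_lt (by rw [← Real.norm_eq_abs]; exact hlt hp)
  have hG0 : ∀ n, 0 ≤ G n := fun n => by rw [hGval]; exact norm_nonneg _
  -- the auxiliary function u p = G p / (1 - G p) and its summability over primes
  set u : ℕ → ℝ := fun n => G n / (1 - G n) with hu
  have hu_nonneg : ∀ {p : ℕ}, p.Prime → 0 ≤ u p := by
    intro p hp
    exact div_nonneg (hG0 p) (by linarith [hlt' hp])
  have hP := summable_primes_norm_F hα s
  have hP' : Summable (fun p : Nat.Primes => G (p : ℕ)) := hP
  have husum : Summable (fun p : Nat.Primes => u (p : ℕ)) := by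
    have hcof : ∀ᶠ p : Nat.Primes in Filter.cofinite, ‖u (p : ℕ)‖ ≤ 2 * G (p : ℕ) := by
      filter_upwards [hP'.tendsto_cofinite_zero.eventually_lt_const (by norm_num :
        (0:ℝ) < 1/2)] with p hp
      have h1 : G (p : ℕ) ≤ 1/2 := hp.le
      rw [Real.norm_eq_abs, abs_of_nonneg (hu_nonneg p.prop)]
      rw [hu]
      rw [div_le_iff₀ (by linarith)]
      nlinarith [hG0 (p : ℕ)]
    exact Summable.of_norm_bounded_eventually (hP'.mul_left 2) hcof
  -- its indicator version over ℕ
  have huind : Summable (Set.indicator {p : ℕ | p.Prime} u) :=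
    summable_subtype_iff_indicator.mp husum
  set T : ℝ := ∑' n : ℕ, Set.indicator {p : ℕ | p.Prime} u n with hT
  -- uniform bound for the partial sums
  refine summable_of_sum_range_le (c := Real.exp T) (fun n => norm_nonneg _) (fun N => ?_)
  have hsm := EulerProduct.summable_and_hasSum_smoothNumbers_prod_primesBelow_geometric
    (f := G) hlt N
  have hind : HasSum (Set.indicator (N.smoothNumbers) (G ·))
      (∏ p ∈ N.primesBelow, (1 - G p)⁻¹) := hasSum_subtype_iff_indicator.mp hsm.2
  have step1 : ∑ n ∈ Finset.range N, ‖F α s n‖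
      ≤ ∏ p ∈ N.primesBelow, (1 - G p)⁻¹ := by
    have heq : ∑ n ∈ Finset.range N, ‖F α s n‖
        = ∑ n ∈ Finset.range N, Set.indicator (N.smoothNumbers) (G ·) n := by
      refine Finset.sum_congr rfl fun n hn => ?_
      rcases eq_or_ne n 0 with rfl | hn0
      · rw [Set.indicator_of_notMem (fun h => (Nat.ne_zero_of_mem_smoothNumbers h) rfl),
          map_zero, norm_zero]
      · rw [Set.indicator_of_mem (Nat.mem_smoothNumbers_of_lt (Nat.pos_of_ne_zero hn0)
          (Finset.mem_range.mp hn))]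
        exact hGval n
    rw [heq]
    exact Summable.sum_le_tsum (Finset.range N)
      (fun i _ => Set.indicator_apply_nonneg (fun _ => hG0 i)) hind.summable
      |>.trans_eq hind.tsum_eq
  have step2 : ∏ p ∈ N.primesBelow, (1 - G p)⁻¹
      ≤ Real.exp (∑ p ∈ N.primesBelow, u p) := by
    rw [Real.exp_sum]
    refine Finset.prod_le_prod (fun p hp => ?_) (fun p hp => ?_)
    · have h := hlt' (Nat.prime_of_mem_primesBelow hp)
      exact inv_nonneg.mpr (by linarith)
    · have hplt := hlt' (Nat.prime_of_mem_primesBelow hp)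
      have hne : 1 - G p ≠ 0 := ne_of_gt (by linarith)
      have h1 : (1 - G p)⁻¹ = 1 + u p := by
        rw [hu]
        field_simp
        ring
      rw [h1, add_comm]
      exact Real.add_one_le_exp _
  have step3 : ∑ p ∈ N.primesBelow, u p ≤ T := by
    have heq : ∑ p ∈ N.primesBelow, u p
        = ∑ p ∈ N.primesBelow, Set.indicator {p : ℕ | p.Prime} u p :=
      Finset.sum_congr rfl fun p hp =>
        (Set.indicator_of_mem (Nat.prime_of_mem_primesBelow hp) _).symm
    rw [heq, hT]
    exact Summable.sum_le_tsum (N.primesBelow)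
      (fun i _ => Set.indicator_apply_nonneg (fun hi => hu_nonneg hi)) huind
  calc ∑ n ∈ Finset.range N, ‖F α s n‖
      ≤ ∏ p ∈ N.primesBelow, (1 - G p)⁻¹ := step1
    _ ≤ Real.exp (∑ p ∈ N.primesBelow, u p) := step2
    _ ≤ Real.exp T := Real.exp_le_exp.mpr step3

theorem twisted_zeta_euler_product (α : ℂ) (hα : ‖α‖ < 1) (s : ℂ)
    (hs : (3 / Real.log 3) * Real.log ‖α‖ < s.re) :
    Summable (fun p : {p : ℕ // p.Prime} => ‖α ^ (p : ℕ) * ((p : ℕ) : ℂ) ^ (-s)‖) ∧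
    Multipliable (fun p : {p : ℕ // p.Prime} =>
      (1 - α ^ (p : ℕ) * ((p : ℕ) : ℂ) ^ (-s))⁻¹) ∧
    Summable (fun n : ℕ => ‖α ^ S (n + 1) * ((n + 1 : ℕ) : ℂ) ^ (-s)‖) ∧
    (∏' p : {p : ℕ // p.Prime}, (1 - α ^ (p : ℕ) * ((p : ℕ) : ℂ) ^ (-s))⁻¹) =
      ∑' n : ℕ, α ^ S (n + 1) * ((n + 1 : ℕ) : ℂ) ^ (-s) := by
  have hsum := summable_norm_F hα hs
  have hFp : ∀ p : {p : ℕ // p.Prime},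
      F α s (p : ℕ) = α ^ (p : ℕ) * ((p : ℕ) : ℂ) ^ (-s) := fun p => by
    rw [F_apply α s p.prop.ne_zero, S_prime p.prop]
  have hFn : ∀ n : ℕ, F α s (n + 1) = α ^ S (n + 1) * ((n + 1 : ℕ) : ℂ) ^ (-s) := fun n =>
    F_apply α s (Nat.succ_ne_zero n)
  refine ⟨?_, ?_, ?_, ?_⟩
  · have h := hsum.comp_injective
      (Subtype.val_injective : Function.Injective ((↑) : {p : ℕ // p.Prime} → ℕ))
    exact h.congr fun p => by rw [Function.comp_apply, hFp]
  · have hp := EulerProduct.eulerProduct_completely_multiplicative_hasProd (f := F α s) hsum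
    have he : (fun p : Nat.Primes => (1 - F α s (p : ℕ))⁻¹)
        = fun p : {p : ℕ // p.Prime} => (1 - α ^ (p : ℕ) * ((p : ℕ) : ℂ) ^ (-s))⁻¹ :=
      funext fun p => congrArg (fun x => (1 - x)⁻¹) (hFp p)
    exact he ▸ hp.multipliable
  · have hinj : Function.Injective (fun n : ℕ => n + 1) := fun a b h => by simpa using h
    have h := hsum.comp_injective hinj
    exact h.congr fun n => by rw [Function.comp_apply, hFn]
  · have h4 := EulerProduct.eulerProduct_completely_multiplicative_tprod (f := F α s) hsum
    have he : (fun p : Nat.Primes => (1 - F α s (p : ℕ))⁻¹)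
        = fun p : {p : ℕ // p.Prime} => (1 - α ^ (p : ℕ) * ((p : ℕ) : ℂ) ^ (-s))⁻¹ :=
      funext fun p => congrArg (fun x => (1 - x)⁻¹) (hFp p)
    rw [← he]
    refine h4.trans ?_
    rw [Summable.tsum_eq_zero_add hsum.of_norm, map_zero, zero_add]
    exact tsum_congr fun n => hFn n
end

section
/- Let p be an odd prime and c : ℕ → ℂ_p with |c(n)|_p bounded on integers coprime to p, and let α ∈ ℂ_p with |α|_p < 1. Then the twisted coefficients α^{S(n)} c(n) tend to 0 p-adically as n → ∞ (over n coprime to p), so the twisted p-adic Dirichlet series Σ_{p∤n} α^{S(n)} c(n)⟨n⟩^{-s} converges for all |s|_p < p^{(p-2)/(p-1)}. -/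
lemma S_mul_s18 {a b : ℕ} (ha : a ≠ 0) (hb : b ≠ 0) : S (a * b) = S a + S b := by
  unfold S
  rw [Nat.factorization_mul ha hb, Finsupp.sum_add_index]
  · intro p _; simp
  · intro p _ k1 k2; ring

lemma S_prime_s18 {q : ℕ} (hq : q.Prime) : S q = q := by
  unfold S
  rw [hq.factorization, Finsupp.sum_single_index] <;> simp

lemma le_two_pow_S : ∀ n : ℕ, n ≠ 0 → n ≤ 2 ^ S n := by
  intro n
  induction n using Nat.strong_induction_on with
  | _ n ih =>
    intro hn
    rcases eq_or_ne n 1 with rfl | h1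
    · simp [S]
    · have hq := Nat.minFac_prime h1
      have hdvd := Nat.minFac_dvd n
      obtain ⟨m, hm⟩ := hdvd
      have hm0 : m ≠ 0 := by rintro rfl; simp at hm; exact hn hm
      have hmlt : m < n := by
        rw [hm]
        exact lt_mul_of_one_lt_left (Nat.pos_of_ne_zero hm0) hq.one_lt |>.trans_eq
          (by rw [mul_comm]) |>.trans_le le_rfl
      have := ih m hmlt hm0
      calc n = n.minFac * m := hm
        _ ≤ 2 ^ n.minFac * 2 ^ S m :=
            Nat.mul_le_mul (Nat.lt_two_pow_self (n := _)).le this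
        _ = 2 ^ (n.minFac + S m) := (pow_add 2 _ _).symm
        _ = 2 ^ S n := by
            have hS : S n = n.minFac + S m := by
              conv_lhs => rw [hm]
              rw [S_mul_s18 hq.ne_zero hm0, S_prime_s18 hq]
            rw [hS]

lemma S_tendsto : Filter.Tendsto S Filter.atTop Filter.atTop := by
  apply Filter.tendsto_atTop_atTop.mpr
  intro b
  refine ⟨2 ^ b, fun n hn => ?_⟩
  have hn0 : n ≠ 0 := by have := pow_pos (show 0 < 2 from two_pos) b; omega
  have := le_two_pow_S n hn0
  exact (Nat.pow_le_pow_iff_right one_lt_two).mp (le_trans hn this)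

/-- Twisting by `ψ(n) = α^{S(n)}` with `|α|_p < 1` makes the `p`-adic Dirichlet
series converge.  `K` is a complete nonarchimedean normed field (such as `ℂ_p`)
and `pow n s` represents `⟨n⟩^{-s}`, of norm `1` for `p ∤ n` on the disk
`‖s‖ < p^{(p-2)/(p-1)}`. -/
theorem twisted_padic_dirichlet_series_converges
    {K : Type*} [NontriviallyNormedField K] [CompleteSpace K] [IsUltrametricDist K]
    (p : ℕ) (hp : p.Prime) (hodd : Odd p)
    (pow : ℕ → K → K)
    (hpow : ∀ (n : ℕ) (s : K), ¬ p ∣ n →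
      ‖s‖ < (p : ℝ) ^ (((p : ℝ) - 2) / ((p : ℝ) - 1)) → ‖pow n s‖ = 1)
    (c : ℕ → K) (C : ℝ) (hc : ∀ n : ℕ, ¬ p ∣ n → ‖c n‖ ≤ C)
    (α : K) (hα : ‖α‖ < 1) :
    Filter.Tendsto (fun n : ℕ => if p ∣ n then (0 : ℝ) else ‖α ^ S n * c n‖)
      Filter.atTop (nhds 0) ∧
    ∀ s : K, ‖s‖ < (p : ℝ) ^ (((p : ℝ) - 2) / ((p : ℝ) - 1)) →
      Summable (fun n : ℕ =>
        if p ∣ n then (0 : K) else α ^ S n * c n * pow n s) := by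
  have hC : 0 ≤ C := le_trans (norm_nonneg _) (hc 1 (by simpa using hp.one_lt.ne'))
  -- upper bound tends to 0
  have hupper : Filter.Tendsto (fun n : ℕ => ‖α‖ ^ S n * C) Filter.atTop (nhds 0) := by
    have h1 : Filter.Tendsto (fun k : ℕ => ‖α‖ ^ k) Filter.atTop (nhds 0) :=
      tendsto_pow_atTop_nhds_zero_of_lt_one (norm_nonneg α) hα
    simpa using (h1.comp S_tendsto).mul_const C
  have hbound : ∀ n : ℕ,
      (if p ∣ n then (0 : ℝ) else ‖α ^ S n * c n‖) ≤ ‖α‖ ^ S n * C := by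
    intro n
    split_ifs with h
    · positivity
    · calc ‖α ^ S n * c n‖ = ‖α‖ ^ S n * ‖c n‖ := by rw [norm_mul, norm_pow]
        _ ≤ ‖α‖ ^ S n * C := by
            exact mul_le_mul_of_nonneg_left (hc n h) (by positivity)
  have hnonneg : ∀ n : ℕ, 0 ≤ (if p ∣ n then (0 : ℝ) else ‖α ^ S n * c n‖) := by
    intro n; split_ifs <;> positivity
  have h1 : Filter.Tendsto (fun n : ℕ => if p ∣ n then (0 : ℝ) else ‖α ^ S n * c n‖)
      Filter.atTop (nhds 0) := squeeze_zero hnonneg hbound hupper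
  refine ⟨h1, fun s hs => ?_⟩
  apply NonarchimedeanAddGroup.summable_of_tendsto_cofinite_zero
  rw [Nat.cofinite_eq_atTop]
  refine tendsto_zero_iff_norm_tendsto_zero.mpr ?_
  have heq : ∀ n : ℕ, ‖if p ∣ n then (0 : K) else α ^ S n * c n * pow n s‖
      = (if p ∣ n then (0 : ℝ) else ‖α ^ S n * c n‖) := by
    intro n
    split_ifs with h
    · simp
    · rw [norm_mul, hpow n s h hs, mul_one]
  simpa only [heq] using h1
end
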